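/- arXiv:1609.07644 — 4 statements merged into one kernel-verified Lean document; each statement's English description precedes it below -/
import Mathlib

section
/- Let a, b > 0, θ ∈ [0,1], l ∈ ℝ, and let κ : [0,∞) → ℝ be a measurable function taking only the values a and b such that δ·Leb({x ∈ [0, 1/δ] : κ(x) = b}) → θ as δ → 0⁺, where Leb denotes Lebesgue measure. Then lim_{δ→0⁺} ∫₀¹ κ(x/δ)^{-1} dx = (1 − θ)/a + θ/b, and consequently the tensile forces F^δ := l·(∫₀¹ κ(x/δ)^{-1} dx)^{-1} converge to l·((1 − θ)/a + θ/b)^{-1} as δ → 0⁺. -/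
open MeasureTheory in
/-- Non-periodic one-dimensional homogenization: if the two-valued modulus `κ` has
asymptotic volume fraction `θ` of the phase with value `b`, in the sense that
`δ·Leb({x ∈ [0,1/δ] : κ(x) = b}) → θ` as `δ → 0⁺`, then `∫₀¹ κ(x/δ)⁻¹ dx` converges to
`(1-θ)/a + θ/b` and the tensile forces `F^δ = l·(∫₀¹ κ(x/δ)⁻¹ dx)⁻¹` converge to
`l·((1-θ)/a + θ/b)⁻¹`. -/
theorem stmt4 (a b θ l : ℝ) (ha : 0 < a) (hb : 0 < b) (hθ : θ ∈ Set.Icc (0 : ℝ) 1)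
    (κ : ℝ → ℝ) (hκm : Measurable κ)
    (hval : ∀ x : ℝ, 0 ≤ x → κ x = a ∨ κ x = b)
    (hfrac : Filter.Tendsto
      (fun δ : ℝ => δ * (volume {x : ℝ | x ∈ Set.Icc 0 (1 / δ) ∧ κ x = b}).toReal)
      (nhdsWithin 0 (Set.Ioi 0)) (nhds θ)) :
    Filter.Tendsto (fun δ : ℝ => ∫ x in (0 : ℝ)..1, (κ (x / δ))⁻¹)
      (nhdsWithin 0 (Set.Ioi 0)) (nhds ((1 - θ) / a + θ / b)) ∧
    Filter.Tendsto (fun δ : ℝ => l * (∫ x in (0 : ℝ)..1, (κ (x / δ))⁻¹)⁻¹)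
      (nhdsWithin 0 (Set.Ioi 0)) (nhds (l * ((1 - θ) / a + θ / b)⁻¹)) := by
  -- key identity for δ > 0
  have key : ∀ δ : ℝ, 0 < δ →
      ∫ x in (0 : ℝ)..1, (κ (x / δ))⁻¹ =
        a⁻¹ + (b⁻¹ - a⁻¹) *
          (δ * (volume {x : ℝ | x ∈ Set.Icc 0 (1 / δ) ∧ κ x = b}).toReal) := by
    intro δ hδ
    set S : Set ℝ := {x : ℝ | x ∈ Set.Icc 0 (1 / δ) ∧ κ x = b} with hS
    set T : Set ℝ := {x : ℝ | κ (δ⁻¹ * x) = b} with hT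
    have hTmeas : MeasurableSet T := by
      have : T = (fun x => κ (δ⁻¹ * x)) ⁻¹' {b} := rfl
      rw [this]
      exact (hκm.comp (measurable_const_mul δ⁻¹)) (measurableSet_singleton b)
    -- rewrite integrand
    have hcongr : ∀ x ∈ Set.uIcc (0:ℝ) 1,
        (κ (x / δ))⁻¹ = a⁻¹ + T.indicator (fun _ => b⁻¹ - a⁻¹) x := by
      intro x hx
      rw [Set.uIcc_of_le zero_le_one] at hx
      have hx0 : 0 ≤ x / δ := div_nonneg hx.1 hδ.le
      have hxd : x / δ = δ⁻¹ * x := div_eq_inv_mul x δ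
      by_cases hxT : x ∈ T
      · have : κ (x / δ) = b := by rw [hxd]; exact hxT
        rw [this, Set.indicator_of_mem hxT]; ring
      · have hknb : κ (x / δ) ≠ b := by rw [hxd]; exact hxT
        have : κ (x / δ) = a := (hval _ hx0).resolve_right hknb
        rw [this, Set.indicator_of_notMem hxT]; ring
    rw [intervalIntegral.integral_congr hcongr]
    have hint1 : IntervalIntegrable (fun _ : ℝ => a⁻¹) volume 0 1 :=
      intervalIntegrable_const
    have hint2 : IntervalIntegrable (T.indicator fun _ => b⁻¹ - a⁻¹) volume 0 1 := by
      rw [intervalIntegrable_iff]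
      have hfin : IntegrableOn (fun _ : ℝ => b⁻¹ - a⁻¹) (Set.uIoc 0 1) volume :=
        integrableOn_const (by
          rw [Set.uIoc_of_le zero_le_one, Real.volume_Ioc]
          exact ENNReal.ofReal_ne_top)
      exact hfin.indicator hTmeas
    rw [intervalIntegral.integral_add hint1 hint2, intervalIntegral.integral_const]
    have hle : (0:ℝ) ≤ 1 := zero_le_one
    rw [intervalIntegral.integral_of_le hle, setIntegral_indicator hTmeas,
      setIntegral_const]
    -- compute the measure
    have hpre : (fun x => δ⁻¹ * x) ⁻¹' S = Set.Icc 0 1 ∩ T := by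
      ext x
      simp only [Set.mem_preimage, hS, Set.mem_setOf_eq, Set.mem_Icc, Set.mem_inter_iff, hT,
        one_div]
      constructor
      · rintro ⟨⟨h0, h1⟩, hk⟩
        have hid : δ * δ⁻¹ = 1 := mul_inv_cancel₀ hδ.ne'
        refine ⟨⟨?_, ?_⟩, hk⟩
        · have h' := mul_le_mul_of_nonneg_left h0 hδ.le
          rw [mul_zero, ← mul_assoc, hid, one_mul] at h'
          exact h'
        · have h' := mul_le_mul_of_nonneg_left h1 hδ.le
          rw [← mul_assoc, hid, one_mul] at h'
          exact h'
      · rintro ⟨⟨h0, h1⟩, hk⟩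
        refine ⟨⟨by positivity, ?_⟩, hk⟩
        calc δ⁻¹ * x ≤ δ⁻¹ * 1 := by
              exact mul_le_mul_of_nonneg_left h1 (inv_pos.2 hδ).le
          _ = δ⁻¹ := mul_one _
    have hIccIoc : volume (Set.Ioc 0 1 ∩ T) = volume (Set.Icc 0 1 ∩ T) := by
      apply le_antisymm (measure_mono (Set.inter_subset_inter_left _ Set.Ioc_subset_Icc_self))
      calc volume (Set.Icc 0 1 ∩ T) ≤ volume ((Set.Ioc 0 1 ∩ T) ∪ {0}) := by
            apply measure_mono
            rintro x ⟨⟨h0, h1⟩, hx⟩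
            rcases h0.lt_or_eq with h | h
            · exact Or.inl ⟨⟨h, h1⟩, hx⟩
            · exact Or.inr (by simp [← h])
        _ ≤ volume (Set.Ioc 0 1 ∩ T) + volume {0} := measure_union_le _ _
        _ = volume (Set.Ioc 0 1 ∩ T) := by simp
    have hSfin : volume S ≠ ⊤ := by
      apply ne_top_of_le_ne_top _ (measure_mono (fun x hx => hx.1))
      simp [Real.volume_Icc]
    have hvol : volume (Set.Ioc 0 1 ∩ T) = ENNReal.ofReal δ * volume S := by
      rw [hIccIoc, ← hpre]
      have := Real.volume_preimage_mul_left (a := δ⁻¹) (by positivity) S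
      rw [this, inv_inv, abs_of_pos hδ]
    rw [measureReal_def, hvol]
    rw [ENNReal.toReal_mul, ENNReal.toReal_ofReal hδ.le]
    simp [smul_eq_mul]
    ring
  have hlimval : a⁻¹ + (b⁻¹ - a⁻¹) * θ = (1 - θ) / a + θ / b := by
    field_simp; ring
  have hlim : Filter.Tendsto
      (fun δ : ℝ => a⁻¹ + (b⁻¹ - a⁻¹) *
        (δ * (volume {x : ℝ | x ∈ Set.Icc 0 (1 / δ) ∧ κ x = b}).toReal))
      (nhdsWithin 0 (Set.Ioi 0)) (nhds ((1 - θ) / a + θ / b)) := by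
    rw [← hlimval]
    exact Filter.Tendsto.const_add _ (hfrac.const_mul _)
  have h1 : Filter.Tendsto (fun δ : ℝ => ∫ x in (0 : ℝ)..1, (κ (x / δ))⁻¹)
      (nhdsWithin 0 (Set.Ioi 0)) (nhds ((1 - θ) / a + θ / b)) := by
    apply hlim.congr'
    filter_upwards [self_mem_nhdsWithin] with δ hδ
    exact (key δ hδ).symm
  have hpos : (0:ℝ) < (1 - θ) / a + θ / b := by
    rcases hθ.2.lt_or_eq with h | h
    · have h1' : 0 < (1 - θ) / a := div_pos (by linarith) ha
      have h2' : 0 ≤ θ / b := div_nonneg hθ.1 hb.le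
      linarith
    · rw [h]; simp; positivity
  exact ⟨h1, (h1.inv₀ hpos.ne').const_mul l⟩
end

section
/- Let κ_met, κ_cer > 0, θ ∈ [0,1], l ∈ ℝ, and let (X_q)_{q ∈ ℕ} be an independent, identically distributed sequence of {0,1}-valued random variables with P(X_q = 1) = θ. Define the random longitudinal modulus ω(x) := κ_met + (κ_cer − κ_met)·X_{⌊x⌋} for x ≥ 0. Then almost surely, the tensile forces F^δ(ω) := l·(∫₀¹ ω(x/δ)^{-1} dx)^{-1} converge as δ → 0⁺ to l·((1 − θ)/κ_met + θ/κ_cer)^{-1}, which equals both the homogenized force F^hom and the force F^ECM produced by the one-dimensional embedded cell method. -/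
open MeasureTheory Filter Finset

open MeasureTheory Filter Finset

private lemma aux_floor_eq {δ x : ℝ} (hδ : 0 < δ) {q : ℕ} (h2 : δ * q < x)
    (h3 : x < δ * ((q : ℝ) + 1)) : ⌊x / δ⌋₊ = q := by
  have hx0 : (0:ℝ) ≤ x / δ := by
    have : (0:ℝ) ≤ δ * q := by positivity
    have hx : 0 < x := lt_of_le_of_lt this h2
    positivity
  rw [Nat.floor_eq_iff hx0]
  constructor
  · rw [le_div_iff₀ hδ]; nlinarith
  · rw [div_lt_iff₀ hδ]; nlinarith

private lemma aux_intInt {g : ℕ → ℝ} {C : ℝ} (hC : ∀ q, |g q| ≤ C) (δ a b : ℝ) :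
    IntervalIntegrable (fun x => g ⌊x / δ⌋₊) volume a b := by
  have hm : Measurable fun x : ℝ => g ⌊x / δ⌋₊ :=
    measurable_from_nat.comp (measurable_id.div_const δ).nat_floor
  refine (intervalIntegrable_const (c := C)).mono_fun hm.aestronglyMeasurable ?_
  refine Filter.Eventually.of_forall fun x => ?_
  have hC0 : (0:ℝ) ≤ C := le_trans (abs_nonneg _) (hC 0)
  simpa [Real.norm_eq_abs, abs_of_nonneg hC0] using hC ⌊x / δ⌋₊

private lemma aux_piece {g : ℕ → ℝ} {δ : ℝ} (hδ : 0 < δ) (q : ℕ) :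
    ∫ x in (δ * q)..(δ * ((q : ℝ) + 1)), g ⌊x / δ⌋₊ = δ * g q := by
  have hle : δ * q ≤ δ * ((q : ℝ) + 1) := by nlinarith
  have h1 : ∀ᵐ x : ℝ, x ≠ δ * ((q : ℝ) + 1) := by
    refine ae_iff.2 ?_
    simp only [not_ne_iff, Set.setOf_eq_eq_singleton]
    exact measure_singleton _
  rw [intervalIntegral.integral_congr_ae (g := fun _ => g q) ?_]
  · rw [intervalIntegral.integral_const, smul_eq_mul]; ring
  · filter_upwards [h1] with x hx hmem
    rw [Set.uIoc_of_le hle] at hmem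
    obtain ⟨h2, h3⟩ := hmem
    rw [aux_floor_eq hδ h2 (lt_of_le_of_ne h3 hx)]

private lemma aux_identity {g : ℕ → ℝ} {C : ℝ} (hC : ∀ q, |g q| ≤ C) {δ : ℝ}
    (hδ : 0 < δ) (hδ1 : δ < 1) :
    ∫ x in (0:ℝ)..1, g ⌊x / δ⌋₊ =
      δ * ∑ q ∈ range ⌊1/δ⌋₊, g q + (1 - δ * ⌊1/δ⌋₊) * g ⌊1/δ⌋₊ := by
  set N := ⌊1/δ⌋₊ with hN
  have hδ0 : (0:ℝ) ≤ 1/δ := by positivity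
  have hN1 : δ * N ≤ 1 := by
    have := Nat.floor_le hδ0
    calc δ * (N:ℝ) ≤ δ * (1/δ) := by nlinarith
    _ = 1 := by field_simp
  have hN2 : 1 < δ * ((N:ℝ) + 1) := by
    have := Nat.lt_floor_add_one (1/δ)
    calc (1:ℝ) = δ * (1/δ) := by field_simp
    _ < δ * ((N:ℝ) + 1) := by nlinarith
  have hsplit : ∫ x in (0:ℝ)..1, g ⌊x / δ⌋₊ =
      (∫ x in (0:ℝ)..(δ*N), g ⌊x / δ⌋₊) + ∫ x in (δ*(N:ℝ))..1, g ⌊x / δ⌋₊ :=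
    (intervalIntegral.integral_add_adjacent_intervals (aux_intInt hC δ _ _)
      (aux_intInt hC δ _ _)).symm
  have hsum : (∫ x in (0:ℝ)..(δ*N), g ⌊x / δ⌋₊) = δ * ∑ q ∈ range N, g q := by
    have := intervalIntegral.sum_integral_adjacent_intervals
      (a := fun q : ℕ => δ * q) (n := N)
      (fun k _ => by exact_mod_cast aux_intInt hC δ (δ*k) (δ*(k+1)))
    simp only [Nat.cast_zero, mul_zero] at this
    rw [← this, Finset.mul_sum]
    refine Finset.sum_congr rfl fun q _ => ?_
    push_cast
    exact aux_piece hδ q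
  have htail : (∫ x in (δ*(N:ℝ))..1, g ⌊x / δ⌋₊) = (1 - δ * N) * g N := by
    rw [intervalIntegral.integral_congr_ae (g := fun _ => g N) ?_]
    · rw [intervalIntegral.integral_const, smul_eq_mul]
    · refine Filter.Eventually.of_forall fun x hmem => ?_
      rw [Set.uIoc_of_le hN1] at hmem
      obtain ⟨h2, h3⟩ := hmem
      rw [aux_floor_eq hδ h2 (lt_of_le_of_lt h3 hN2)]
  rw [hsplit, hsum, htail]

private lemma det_tendsto (g : ℕ → ℝ) (C : ℝ) (hC : ∀ q, |g q| ≤ C) (E : ℝ)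
    (h : Filter.Tendsto (fun n : ℕ => (n:ℝ)⁻¹ * ∑ i ∈ range n, g i) atTop (nhds E)) :
    Filter.Tendsto (fun δ : ℝ => ∫ x in (0:ℝ)..1, g ⌊x / δ⌋₊)
      (nhdsWithin 0 (Set.Ioi 0)) (nhds E) := by
  have hC0 : (0:ℝ) ≤ C := le_trans (abs_nonneg _) (hC 0)
  have hmem : Set.Ioo (0:ℝ) 1 ∈ nhdsWithin (0:ℝ) (Set.Ioi 0) :=
    Ioo_mem_nhdsGT_of_mem (by norm_num : (0:ℝ) ∈ Set.Ico (0:ℝ) 1)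
  have hNtend : Filter.Tendsto (fun δ : ℝ => ⌊1/δ⌋₊) (nhdsWithin 0 (Set.Ioi 0)) atTop := by
    refine tendsto_nat_floor_atTop.comp ?_
    exact (tendsto_inv_nhdsGT_zero (𝕜 := ℝ)).congr fun x => (one_div x).symm
  -- δ * N → 1
  have hδN : Filter.Tendsto (fun δ : ℝ => δ * (⌊1/δ⌋₊ : ℝ)) (nhdsWithin 0 (Set.Ioi 0)) (nhds 1) := by
    refine tendsto_of_tendsto_of_tendsto_of_le_of_le'
      (g := fun δ : ℝ => 1 - δ) (h := fun _ : ℝ => (1:ℝ)) ?_ tendsto_const_nhds ?_ ?_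
    · have : Filter.Tendsto (fun δ : ℝ => 1 - δ) (nhds 0) (nhds 1) := by
        exact (continuous_const.sub continuous_id).tendsto' (0:ℝ) 1 (by norm_num)
      exact this.mono_left nhdsWithin_le_nhds
    · filter_upwards [hmem] with δ hδ
      have hδ0 : 0 < δ := hδ.1
      have := Nat.lt_floor_add_one (1/δ)
      have h1 : (1:ℝ) < δ * ((⌊1/δ⌋₊:ℝ) + 1) := by
        calc (1:ℝ) = δ * (1/δ) := by field_simp
        _ < δ * ((⌊1/δ⌋₊:ℝ) + 1) := by nlinarith
      nlinarith
    · filter_upwards [hmem] with δ hδ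
      have hδ0 : 0 < δ := hδ.1
      have := Nat.floor_le (by positivity : (0:ℝ) ≤ 1/δ)
      calc δ * (⌊1/δ⌋₊:ℝ) ≤ δ * (1/δ) := by nlinarith
      _ = 1 := by field_simp
  have havg : Filter.Tendsto (fun δ : ℝ => ((⌊1/δ⌋₊:ℝ))⁻¹ * ∑ i ∈ range ⌊1/δ⌋₊, g i)
      (nhdsWithin 0 (Set.Ioi 0)) (nhds E) := h.comp hNtend
  have hterm1 : Filter.Tendsto (fun δ : ℝ => δ * ∑ q ∈ range ⌊1/δ⌋₊, g q)
      (nhdsWithin 0 (Set.Ioi 0)) (nhds E) := by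
    have := hδN.mul havg
    rw [one_mul] at this
    refine this.congr' ?_
    filter_upwards [hNtend.eventually_ge_atTop 1] with δ hδ
    have hN0 : ((⌊1/δ⌋₊:ℝ)) ≠ 0 := by
      exact_mod_cast Nat.one_le_iff_ne_zero.mp hδ
    field_simp
  have hterm2 : Filter.Tendsto (fun δ : ℝ => (1 - δ * (⌊1/δ⌋₊:ℝ)) * g ⌊1/δ⌋₊)
      (nhdsWithin 0 (Set.Ioi 0)) (nhds 0) := by
    refine squeeze_zero_norm' (a := fun δ : ℝ => δ * C) ?_ ?_
    · filter_upwards [hmem] with δ hδ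
      have hδ0 : 0 < δ := hδ.1
      have h1 : (1:ℝ) < δ * ((⌊1/δ⌋₊:ℝ) + 1) := by
        have := Nat.lt_floor_add_one (1/δ)
        calc (1:ℝ) = δ * (1/δ) := by field_simp
        _ < δ * ((⌊1/δ⌋₊:ℝ) + 1) := by nlinarith
      have h2 : δ * (⌊1/δ⌋₊:ℝ) ≤ 1 := by
        have := Nat.floor_le (by positivity : (0:ℝ) ≤ 1/δ)
        calc δ * (⌊1/δ⌋₊:ℝ) ≤ δ * (1/δ) := by nlinarith
        _ = 1 := by field_simp
      have hb : |1 - δ * (⌊1/δ⌋₊:ℝ)| ≤ δ := by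
        rw [abs_of_nonneg (by linarith)]; linarith
      calc ‖(1 - δ * (⌊1/δ⌋₊:ℝ)) * g ⌊1/δ⌋₊‖ = |1 - δ * (⌊1/δ⌋₊:ℝ)| * |g ⌊1/δ⌋₊| := by
            rw [Real.norm_eq_abs, abs_mul]
      _ ≤ δ * C := mul_le_mul hb (hC _) (abs_nonneg _) (le_of_lt hδ0)
    · have : Filter.Tendsto (fun δ : ℝ => δ * C) (nhds 0) (nhds 0) := by
        exact (continuous_id.mul continuous_const).tendsto' (0:ℝ) 0 (by simp)
      exact this.mono_left nhdsWithin_le_nhds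
  have := hterm1.add hterm2
  rw [add_zero] at this
  refine this.congr' ?_
  filter_upwards [hmem] with δ hδ
  exact (aux_identity hC hδ.1 hδ.2).symm

open MeasureTheory ProbabilityTheory in
/-- Stochastic homogenization of the one-dimensional tensile test: for the random
longitudinal modulus `ω(x) = κ_met + (κ_cer - κ_met)·X_{⌊x⌋}` built from i.i.d.
Bernoulli(θ) random variables, almost surely the tensile forces
`F^δ(ω) = l·(∫₀¹ ω(x/δ)⁻¹ dx)⁻¹` converge as `δ → 0⁺` to
`l·((1-θ)/κ_met + θ/κ_cer)⁻¹`, the common value of the homogenized force `F^hom` and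
the embedded cell force `F^ECM`. -/
theorem stmt6 {Ω : Type*} [MeasureSpace Ω] [IsProbabilityMeasure (ℙ : Measure Ω)]
    (κmet κcer θ l : ℝ) (hmet : 0 < κmet) (hcer : 0 < κcer) (hθ : θ ∈ Set.Icc (0 : ℝ) 1)
    (X : ℕ → Ω → ℝ) (hmeas : ∀ q, Measurable (X q))
    (hval : ∀ q ω, X q ω = 0 ∨ X q ω = 1)
    (hindep : iIndepFun X ℙ)
    (hdist : ∀ q, ℙ {ω | X q ω = 1} = ENNReal.ofReal θ) :
    ∀ᵐ ω : Ω, Filter.Tendsto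
      (fun δ : ℝ => l * (∫ x in (0 : ℝ)..1, (κmet + (κcer - κmet) * X ⌊x / δ⌋₊ ω)⁻¹)⁻¹)
      (nhdsWithin 0 (Set.Ioi 0))
      (nhds (l * ((1 - θ) / κmet + θ / κcer)⁻¹)) := by
  classical
  obtain ⟨hθ0, hθ1⟩ := hθ
  set f : ℝ → ℝ := fun t => κmet⁻¹ + (κcer⁻¹ - κmet⁻¹) * t with hf
  have hfm : Measurable f := measurable_const.add (measurable_id.const_mul _)
  set Y : ℕ → Ω → ℝ := fun q ω' => f (X q ω') with hY
  have hYeq : ∀ q ω', (κmet + (κcer - κmet) * X q ω')⁻¹ = Y q ω' := by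
    intro q ω'
    rcases hval q ω' with h | h <;> simp only [hY, hf, h, mul_zero, add_zero, mul_one]
    · have h1 : κmet + (κcer - κmet) = κcer := by ring
      rw [h1]; ring
  -- distribution facts
  have hA : ∀ q, MeasurableSet {ω' : Ω | X q ω' = 1} :=
    fun q => (hmeas q) (measurableSet_singleton 1)
  have hle1 : ENNReal.ofReal θ ≤ 1 := ENNReal.ofReal_le_one.mpr hθ1
  have key : ∀ q (s : Set ℝ),
      ℙ (X q ⁻¹' s) = (if (1:ℝ) ∈ s then ENNReal.ofReal θ else 0)
        + (if (0:ℝ) ∈ s then 1 - ENNReal.ofReal θ else 0) := by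
    intro q s
    have hcompl : ℙ {ω' : Ω | X q ω' = 1}ᶜ = 1 - ENNReal.ofReal θ := by
      rw [measure_compl (hA q) (measure_ne_top _ _), hdist q, measure_univ]
    by_cases h1 : (1:ℝ) ∈ s <;> by_cases h0 : (0:ℝ) ∈ s
    · rw [if_pos h1, if_pos h0]
      have : X q ⁻¹' s = Set.univ := Set.eq_univ_of_forall fun ω' => by
        rcases hval q ω' with h | h <;> simp only [Set.mem_preimage, h] <;> assumption
      rw [this, measure_univ, add_tsub_cancel_of_le hle1]
    · rw [if_pos h1, if_neg h0, add_zero]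
      have : X q ⁻¹' s = {ω' : Ω | X q ω' = 1} := Set.ext fun ω' => by
        rcases hval q ω' with h | h <;>
          simp only [Set.mem_preimage, Set.mem_setOf_eq, h] <;> norm_num
        · exact h0
        · exact h1
      rw [this, hdist q]
    · rw [if_neg h1, if_pos h0, zero_add]
      have : X q ⁻¹' s = {ω' : Ω | X q ω' = 1}ᶜ := Set.ext fun ω' => by
        rcases hval q ω' with h | h <;>
          simp only [Set.mem_preimage, Set.mem_compl_iff, Set.mem_setOf_eq, h] <;> norm_num
        · exact h0
        · exact h1
      rw [this, hcompl]
    · rw [if_neg h1, if_neg h0, add_zero]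
      have : X q ⁻¹' s = ∅ := Set.eq_empty_iff_forall_notMem.2 fun ω' hω' => by
        rcases hval q ω' with h | h
        · rw [Set.mem_preimage, h] at hω'; exact h0 hω'
        · rw [Set.mem_preimage, h] at hω'; exact h1 hω'
      rw [this, measure_empty]
  have identX : ∀ i, IdentDistrib (X i) (X 0) ℙ ℙ := fun i =>
    ⟨(hmeas i).aemeasurable, (hmeas 0).aemeasurable, Measure.ext fun s hs => by
      rw [Measure.map_apply (hmeas i) hs, Measure.map_apply (hmeas 0) hs, key i s, key 0 s]⟩
  -- integrability
  have hXint : Integrable (X 0) ℙ := by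
    refine Integrable.mono' (integrable_const 1) (hmeas 0).aestronglyMeasurable
      (Filter.Eventually.of_forall fun ω' => ?_)
    rcases hval 0 ω' with h | h <;> simp [h]
  have hYint : Integrable (Y 0) ℙ := (integrable_const κmet⁻¹).add (hXint.const_mul _)
  have hpair : Pairwise (Function.onFun (IndepFun · · ℙ) Y) :=
    fun i j hij => (hindep.indepFun hij).comp hfm hfm
  have hident : ∀ i, IdentDistrib (Y i) (Y 0) ℙ ℙ := fun i => (identX i).comp hfm
  -- expectation
  have hXmean : ∫ ω', X 0 ω' ∂ℙ = θ := by
    have hind : X 0 = Set.indicator {ω' : Ω | X 0 ω' = 1} (fun _ => (1:ℝ)) := by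
      funext ω'
      rcases hval 0 ω' with h | h
      · have hm : ω' ∉ {ω' : Ω | X 0 ω' = 1} := by
          simp only [Set.mem_setOf_eq, h]
          norm_num
        rw [Set.indicator_of_notMem hm]
        exact h
      · have hm : ω' ∈ {ω' : Ω | X 0 ω' = 1} := h
        rw [Set.indicator_of_mem hm]
        exact h
    rw [hind, integral_indicator_const _ (hA 0), measureReal_def, hdist 0, smul_eq_mul, mul_one,
      ENNReal.toReal_ofReal hθ0]
  have hmean : ∫ ω', Y 0 ω' ∂ℙ = (1 - θ) / κmet + θ / κcer := by
    have : ∫ ω', Y 0 ω' ∂ℙ = ∫ ω', (κmet⁻¹ + (κcer⁻¹ - κmet⁻¹) * X 0 ω') ∂ℙ := rfl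
    rw [this, integral_add (integrable_const _) (hXint.const_mul _), integral_const,
      integral_const_mul, hXmean]
    simp only [measureReal_def, measure_univ, ENNReal.toReal_one, one_smul]
    field_simp
    ring
  have hE0 : 0 < (1 - θ) / κmet + θ / κcer := by
    rcases eq_or_lt_of_le hθ1 with h | h
    · rw [← h]; simp only [sub_self, zero_div, zero_add]; positivity
    · exact add_pos_of_pos_of_nonneg (div_pos (by linarith) hmet) (div_nonneg hθ0 hcer.le)
  -- assemble
  filter_upwards [strong_law_ae Y hYint hpair hident] with ω' hω'
  rw [hmean] at hω'
  have hg : Filter.Tendsto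
      (fun n : ℕ => (n:ℝ)⁻¹ * ∑ i ∈ Finset.range n, (κmet + (κcer - κmet) * X i ω')⁻¹)
      Filter.atTop (nhds ((1 - θ) / κmet + θ / κcer)) := by
    simp_rw [hYeq]
    simpa [smul_eq_mul] using hω'
  have hCb : ∀ q, |(κmet + (κcer - κmet) * X q ω')⁻¹| ≤ max κmet⁻¹ κcer⁻¹ := by
    intro q
    rcases hval q ω' with h | h <;> rw [h]
    · simp only [mul_zero, add_zero]
      rw [abs_of_nonneg (inv_nonneg.2 hmet.le)]
      exact le_max_left _ _
    · simp only [mul_one]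
      have h1 : κmet + (κcer - κmet) = κcer := by ring
      rw [h1, abs_of_nonneg (inv_nonneg.2 hcer.le)]
      exact le_max_right _ _
  have hint := det_tendsto _ _ hCb _ hg
  exact (hint.inv₀ hE0.ne').const_mul l
end

section
/- Let λ₀, μ₀ > 0, l ∈ ℝ, set ν₀ := λ₀/(λ₀ + 2μ₀), and define u₀ : [0,1]² → ℝ² by u₀(x) := (−ν₀ l x₁ + ν₀ l/2, l x₂). Then u₀ satisfies the boundary conditions (u₀)₂(x₁, 0) = 0 and (u₀)₂(x₁, 1) = l, the first component has zero mean over (0,1)², and for every continuously differentiable v : [0,1]² → ℝ² with v₂(x₁,0) = v₂(x₁,1) = 0 for all x₁ ∈ [0,1] one has ∫_{[0,1]²} [λ₀ tr(∇^s u₀) tr(∇^s v) + 2μ₀ (∇^s u₀) : (∇^s v)] dx = 0. -/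
open MeasureTheory Matrix

/-- The displacement gradient `∇w` of a map `w : ℝ² → ℝ²` as a 2×2 matrix,
`(∇w)_{ij} = ∂_j w_i`. -/
noncomputable def gradMat (w : ℝ × ℝ → ℝ × ℝ) (x : ℝ × ℝ) : Matrix (Fin 2) (Fin 2) ℝ :=
  Matrix.of fun i j =>
    (fun p : ℝ × ℝ => if i = 0 then p.1 else p.2)
      (fderiv ℝ w x (if j = 0 then ((1 : ℝ), (0 : ℝ)) else ((0 : ℝ), (1 : ℝ))))

/-- The symmetrized gradient `∇^s w = (∇w + (∇w)ᵀ)/2`. -/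
noncomputable def symGrad (w : ℝ × ℝ → ℝ × ℝ) (x : ℝ × ℝ) : Matrix (Fin 2) (Fin 2) ℝ :=
  (2 : ℝ)⁻¹ • (gradMat w x + (gradMat w x)ᵀ)

/-- The double-dot (Frobenius) product `A : B = tr(Aᵀ B)`. -/
noncomputable def ddot (A B : Matrix (Fin 2) (Fin 2) ℝ) : ℝ := (Aᵀ * B).trace

/-- The explicit affine displacement `u₀(x) = (-ν₀ l x₁ + ν₀ l/2, l x₂)` with Poisson
number `ν₀ = λ₀/(λ₀ + 2μ₀)` satisfies the greased Dirichlet boundary conditions, has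
zero-mean first component, and is a weak solution of the homogeneous two-dimensional
tensile test: `∫ [λ₀ tr(∇^s u₀) tr(∇^s v) + 2μ₀ (∇^s u₀) : (∇^s v)] dx = 0` for all C¹
test functions `v` whose second component vanishes on the top and bottom boundary. -/
theorem stmt8 (l lam0 mu0 : ℝ) (hlam : 0 < lam0) (hmu : 0 < mu0)
    (ν₀ : ℝ) (hν : ν₀ = lam0 / (lam0 + 2 * mu0))
    (u₀ : ℝ × ℝ → ℝ × ℝ)
    (hu₀ : ∀ x : ℝ × ℝ, u₀ x = (-(ν₀ * l) * x.1 + ν₀ * l / 2, l * x.2)) :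
    (∀ x₁ : ℝ, (u₀ (x₁, 0)).2 = 0) ∧
    (∀ x₁ : ℝ, (u₀ (x₁, 1)).2 = l) ∧
    (∫ x in Set.Icc (0 : ℝ) 1 ×ˢ Set.Icc (0 : ℝ) 1, (u₀ x).1 = 0) ∧
    (∀ v : ℝ × ℝ → ℝ × ℝ, ContDiff ℝ 1 v →
      (∀ x₁ ∈ Set.Icc (0 : ℝ) 1, (v (x₁, 0)).2 = 0 ∧ (v (x₁, 1)).2 = 0) →
      ∫ x in Set.Icc (0 : ℝ) 1 ×ˢ Set.Icc (0 : ℝ) 1,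
        (lam0 * (symGrad u₀ x).trace * (symGrad v x).trace
          + 2 * mu0 * ddot (symGrad u₀ x) (symGrad v x)) = 0) := by
  have hmeas : MeasurableSet (Set.Icc (0:ℝ) 1 ×ˢ Set.Icc (0:ℝ) 1) :=
    measurableSet_Icc.prod measurableSet_Icc
  have hcomp : IsCompact (Set.Icc (0:ℝ) 1 ×ˢ Set.Icc (0:ℝ) 1) :=
    isCompact_Icc.prod isCompact_Icc
  refine ⟨fun x₁ => by simp [hu₀], fun x₁ => by simp [hu₀], ?_, ?_⟩
  · -- zero mean of the first component
    have h1 : ∫ x in Set.Icc (0 : ℝ) 1 ×ˢ Set.Icc (0 : ℝ) 1, (u₀ x).1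
        = ∫ x in Set.Icc (0 : ℝ) 1 ×ˢ Set.Icc (0 : ℝ) 1,
            (fun x : ℝ × ℝ => -(ν₀ * l) * x.1 + ν₀ * l / 2) x :=
      setIntegral_congr_fun hmeas (fun x _ => by rw [hu₀])
    rw [h1]
    have hint : IntegrableOn (fun x : ℝ × ℝ => -(ν₀ * l) * x.1 + ν₀ * l / 2)
        (Set.Icc (0:ℝ) 1 ×ˢ Set.Icc (0:ℝ) 1) volume :=
      (Continuous.continuousOn (by fun_prop)).integrableOn_compact hcomp
    rw [Measure.volume_eq_prod] at hint ⊢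
    rw [setIntegral_prod _ hint]
    have hinner : ∀ x₁ : ℝ, (∫ y in Set.Icc (0:ℝ) 1,
        (-(ν₀ * l) * x₁ + ν₀ * l / 2)) = -(ν₀ * l) * x₁ + ν₀ * l / 2 := by
      intro x₁; simp [Real.volume_Icc]
    simp only [hinner]
    have : ∫ x₁ in Set.Icc (0:ℝ) 1, (-(ν₀ * l) * x₁ + ν₀ * l / 2)
        = ∫ x₁ in (0:ℝ)..1, (-(ν₀ * l) * x₁ + ν₀ * l / 2) := by
      rw [MeasureTheory.integral_Icc_eq_integral_Ioc,
        ← intervalIntegral.integral_of_le (by norm_num)]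
    rw [this]
    have hi1 : IntervalIntegrable (fun x₁ : ℝ => -(ν₀ * l) * x₁) volume 0 1 :=
      (Continuous.intervalIntegrable (by fun_prop)) 0 1
    have hi2 : IntervalIntegrable (fun _ : ℝ => ν₀ * l / 2) volume 0 1 :=
      intervalIntegrable_const
    rw [intervalIntegral.integral_add hi1 hi2, intervalIntegral.integral_const_mul,
      integral_id, intervalIntegral.integral_const]
    norm_num
    ring
  · -- weak formulation
    intro v hv hbc
    have hden : lam0 + 2 * mu0 ≠ 0 := by positivity
    set c : ℝ := lam0 * (l - ν₀ * l) + 2 * mu0 * l with hc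
    have hpt : ∀ x : ℝ × ℝ,
        lam0 * (symGrad u₀ x).trace * (symGrad v x).trace
          + 2 * mu0 * ddot (symGrad u₀ x) (symGrad v x)
        = c * (fderiv ℝ v x ((0:ℝ),(1:ℝ))).2 := by
      intro x
      have hder : fderiv ℝ u₀ x = ((-(ν₀*l)) • (ContinuousLinearMap.fst ℝ ℝ ℝ)).prod
          (l • ContinuousLinearMap.snd ℝ ℝ ℝ) := by
        have hu : u₀ = fun x : ℝ × ℝ => (-(ν₀ * l) * x.1 + ν₀ * l / 2, l * x.2) := funext hu₀
        rw [hu]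
        exact HasFDerivAt.fderiv (HasFDerivAt.prodMk ((hasFDerivAt_fst.const_mul _).add_const _)
          (hasFDerivAt_snd.const_mul _))
      have hcoef : lam0 * (l - ν₀ * l) - 2 * mu0 * (ν₀ * l) = 0 := by
        rw [hν]; field_simp; ring
      simp only [symGrad, ddot, gradMat, Matrix.trace, Matrix.diag, Fin.sum_univ_two,
        Matrix.mul_apply, Matrix.smul_apply, Matrix.add_apply, Matrix.transpose_apply,
        Matrix.of_apply, hder]
      simp [ContinuousLinearMap.prod_apply, hc]
      linear_combination ((fderiv ℝ v x ((1:ℝ),(0:ℝ))).1) * hcoef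
    rw [setIntegral_congr_fun hmeas (fun x _ => hpt x)]
    rw [MeasureTheory.integral_const_mul]
    have gcont : Continuous fun x : ℝ × ℝ => (fderiv ℝ v x ((0:ℝ),(1:ℝ))).2 :=
      (((hv.continuous_fderiv one_ne_zero).clm_apply continuous_const)).snd
    have hint : IntegrableOn (fun x : ℝ × ℝ => (fderiv ℝ v x ((0:ℝ),(1:ℝ))).2)
        (Set.Icc (0:ℝ) 1 ×ˢ Set.Icc (0:ℝ) 1) volume :=
      gcont.continuousOn.integrableOn_compact hcomp
    rw [Measure.volume_eq_prod] at hint ⊢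
    rw [setIntegral_prod _ hint]
    have hinner : ∀ x₁ ∈ Set.Icc (0:ℝ) 1,
        (∫ y in Set.Icc (0:ℝ) 1, (fderiv ℝ v (x₁, y) ((0:ℝ),(1:ℝ))).2) = (0 : ℝ) := by
      intro x₁ hx₁
      obtain ⟨h0, h1⟩ := hbc x₁ hx₁
      rw [MeasureTheory.integral_Icc_eq_integral_Ioc,
        ← intervalIntegral.integral_of_le (by norm_num)]
      have key : ∫ y in (0:ℝ)..1, (fderiv ℝ v (x₁, y) ((0:ℝ),(1:ℝ))).2
          = (v (x₁,1)).2 - (v (x₁,0)).2 := by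
        apply intervalIntegral.integral_eq_sub_of_hasDerivAt
          (f := fun y => (v (x₁, y)).2)
        · intro t _
          have hd1 : HasFDerivAt v (fderiv ℝ v (x₁, t)) (x₁, t) :=
            (hv.differentiable one_ne_zero _).hasFDerivAt
          have hd2 : HasDerivAt (fun y : ℝ => (x₁, y)) ((0:ℝ), (1:ℝ)) t := by
            simpa using HasDerivAt.prodMk (hasDerivAt_const t x₁) (hasDerivAt_id t)
          have hd3 := hd1.comp_hasDerivAt t hd2
          exact ((ContinuousLinearMap.snd ℝ ℝ ℝ).hasFDerivAt.comp_hasDerivAt t hd3)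
        · exact (gcont.comp (by fun_prop : Continuous fun y : ℝ => (x₁, y))).intervalIntegrable 0 1
      rw [key, h0, h1]; ring
    rw [setIntegral_congr_fun measurableSet_Icc hinner]
    simp
end

section
/- Let λ₀, μ₀ > 0, l ∈ ℝ, ν₀ := λ₀/(λ₀ + 2μ₀), and let λ̄, μ̄ ∈ ℝ be constants. Define u₀(x) := (−ν₀ l x₁ + ν₀ l/2, l x₂) and u₁^hom(x) := (−2c x₁ + 1, 0) with c := (λ̄ (1 − ν₀) l − 2 μ̄ ν₀ l)/(2(λ₀ + 2μ₀)). Then for every continuously differentiable v : [0,1]² → ℝ² with v₂(x₁,0) = v₂(x₁,1) = 0 for all x₁ ∈ [0,1], it holds that ∫_{[0,1]²} [λ₀ tr(∇^s u₁^hom) tr(∇^s v) + 2μ₀ (∇^s u₁^hom) : (∇^s v)] dx = − ∫_{[0,1]²} [λ̄ tr(∇^s u₀) tr(∇^s v) + 2 μ̄ (∇^s u₀) : (∇^s v)] dx. -/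
open MeasureTheory Matrix

/-- Fréchet derivative of an affine map `ℝ² → ℝ²`. -/
lemma affine_fderiv (a b e d k m : ℝ) (x w : ℝ × ℝ) :
    fderiv ℝ (fun p : ℝ × ℝ => (a*p.1 + b*p.2 + e, d*p.1 + k*p.2 + m)) x w
      = (a*w.1 + b*w.2, d*w.1 + k*w.2) := by
  have h : HasFDerivAt (fun p : ℝ × ℝ => (a*p.1 + b*p.2 + e, d*p.1 + k*p.2 + m))
      (ContinuousLinearMap.prod
        (a • ContinuousLinearMap.fst ℝ ℝ ℝ + b • ContinuousLinearMap.snd ℝ ℝ ℝ)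
        (d • ContinuousLinearMap.fst ℝ ℝ ℝ + k • ContinuousLinearMap.snd ℝ ℝ ℝ)) x := by
    have h0 := (ContinuousLinearMap.prod
        (a • ContinuousLinearMap.fst ℝ ℝ ℝ + b • ContinuousLinearMap.snd ℝ ℝ ℝ)
        (d • ContinuousLinearMap.fst ℝ ℝ ℝ + k • ContinuousLinearMap.snd ℝ ℝ ℝ)).hasFDerivAt
        (x := x) |>.add_const ((e, m) : ℝ × ℝ)
    have heq : (fun p : ℝ × ℝ => (a*p.1 + b*p.2 + e, d*p.1 + k*p.2 + m))
        = fun p : ℝ × ℝ => (ContinuousLinearMap.prod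
        (a • ContinuousLinearMap.fst ℝ ℝ ℝ + b • ContinuousLinearMap.snd ℝ ℝ ℝ)
        (d • ContinuousLinearMap.fst ℝ ℝ ℝ + k • ContinuousLinearMap.snd ℝ ℝ ℝ)) p
          + ((e, m) : ℝ × ℝ) := by
      funext p; simp [Prod.ext_iff]
    rw [heq]; exact h0
  rw [h.fderiv]
  simp [Prod.ext_iff]

/-- Pointwise value of the elastic bilinear form with an affine first argument. -/
lemma affine_form (a b e d k m : ℝ) (v : ℝ × ℝ → ℝ × ℝ) (x : ℝ × ℝ) (α β : ℝ) :
    α * (symGrad (fun p : ℝ × ℝ => (a*p.1 + b*p.2 + e, d*p.1 + k*p.2 + m)) x).trace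
        * (symGrad v x).trace
      + 2 * β * ddot (symGrad (fun p : ℝ × ℝ => (a*p.1 + b*p.2 + e, d*p.1 + k*p.2 + m)) x)
          (symGrad v x)
    = (α * (a + k) + 2 * β * a) * (fderiv ℝ v x (1,0)).1
      + (α * (a + k) + 2 * β * k) * (fderiv ℝ v x (0,1)).2
      + (β * (b + d)) * ((fderiv ℝ v x (1,0)).2 + (fderiv ℝ v x (0,1)).1) := by
  simp [symGrad, gradMat, ddot, Matrix.trace_fin_two, Matrix.mul_apply, Fin.sum_univ_two,
    Matrix.transpose_apply, affine_fderiv, Fin.isValue]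
  ring

/-- The integral of `∂₂ v₂` over the unit square vanishes if `v₂` vanishes on the
horizontal parts of the boundary. -/
lemma integral_d2v2_eq_zero (v : ℝ × ℝ → ℝ × ℝ) (hv : ContDiff ℝ 1 v)
    (hbc : ∀ x₁ ∈ Set.Icc (0 : ℝ) 1, (v (x₁, 0)).2 = 0 ∧ (v (x₁, 1)).2 = 0) :
    ∫ x in Set.Icc (0 : ℝ) 1 ×ˢ Set.Icc (0 : ℝ) 1, (fderiv ℝ v x ((0:ℝ),(1:ℝ))).2 = 0 := by
  have hfd : Continuous (fderiv ℝ v) := hv.continuous_fderiv one_ne_zero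
  have hQc : Continuous fun x : ℝ × ℝ => (fderiv ℝ v x ((0:ℝ),(1:ℝ))).2 :=
    ((hfd.clm_apply continuous_const).snd)
  have hint : IntegrableOn (fun x : ℝ × ℝ => (fderiv ℝ v x ((0:ℝ),(1:ℝ))).2)
      (Set.Icc (0 : ℝ) 1 ×ˢ Set.Icc (0 : ℝ) 1) volume :=
    hQc.locallyIntegrable.integrableOn_isCompact (isCompact_Icc.prod isCompact_Icc)
  rw [Measure.volume_eq_prod] at hint ⊢
  rw [setIntegral_prod _ hint]
  have hinner : ∀ x₁ ∈ Set.Icc (0:ℝ) 1,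
      (∫ x₂ in Set.Icc (0:ℝ) 1, (fderiv ℝ v (x₁, x₂) ((0:ℝ),(1:ℝ))).2) = 0 := by
    intro x₁ hx₁
    have hder : ∀ t ∈ Set.uIcc (0:ℝ) 1,
        HasDerivAt (fun t : ℝ => (v (x₁, t)).2) ((fderiv ℝ v (x₁, t) ((0:ℝ),(1:ℝ))).2) t := by
      intro t _
      have h1 : HasDerivAt (fun t : ℝ => ((x₁ : ℝ), t)) (((0:ℝ),(1:ℝ)) : ℝ × ℝ) t :=
        HasDerivAt.prodMk (hasDerivAt_const t x₁) (hasDerivAt_id t)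
      have h2 : HasFDerivAt v (fderiv ℝ v (x₁, t)) (x₁, t) :=
        (hv.differentiable one_ne_zero (x₁, t)).hasFDerivAt
      exact (h2.comp_hasDerivAt t h1).snd
    have hi : IntervalIntegrable (fun t : ℝ => (fderiv ℝ v (x₁, t) ((0:ℝ),(1:ℝ))).2)
        volume 0 1 :=
      (hQc.comp (continuous_const.prodMk continuous_id)).intervalIntegrable 0 1
    have hftc := intervalIntegral.integral_eq_sub_of_hasDerivAt hder hi
    rw [intervalIntegral.integral_of_le (by norm_num : (0:ℝ) ≤ 1)] at hftc
    rw [MeasureTheory.integral_Icc_eq_integral_Ioc, hftc, (hbc x₁ hx₁).1, (hbc x₁ hx₁).2,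
      sub_zero]
  calc (∫ x₁ in Set.Icc (0:ℝ) 1, ∫ x₂ in Set.Icc (0:ℝ) 1, (fderiv ℝ v (x₁, x₂) ((0:ℝ),(1:ℝ))).2)
      = ∫ _x₁ in Set.Icc (0:ℝ) 1, (0:ℝ) :=
        setIntegral_congr_fun measurableSet_Icc fun x₁ hx₁ => hinner x₁ hx₁
    _ = 0 := by simp

/-- The explicit affine function `u₁^hom(x) = (-2c x₁ + 1, 0)` with
`c = (λ̄(1-ν₀)l - 2μ̄ν₀l)/(2(λ₀+2μ₀))` is the first-order corrector of the homogenized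
tensile test: for all admissible C¹ test functions `v`,
`∫ [λ₀ tr(∇^s u₁^hom) tr(∇^s v) + 2μ₀ (∇^s u₁^hom):(∇^s v)]
  = -∫ [λ̄ tr(∇^s u₀) tr(∇^s v) + 2μ̄ (∇^s u₀):(∇^s v)]`. -/
theorem stmt9 (l lam0 mu0 lbar mbar : ℝ) (hlam : 0 < lam0) (hmu : 0 < mu0)
    (ν₀ : ℝ) (hν : ν₀ = lam0 / (lam0 + 2 * mu0))
    (c : ℝ) (hcdef : c = (lbar * (1 - ν₀) * l - 2 * mbar * ν₀ * l) / (2 * (lam0 + 2 * mu0)))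
    (u₀ u₁hom : ℝ × ℝ → ℝ × ℝ)
    (hu₀ : ∀ x : ℝ × ℝ, u₀ x = (-(ν₀ * l) * x.1 + ν₀ * l / 2, l * x.2))
    (hu₁ : ∀ x : ℝ × ℝ, u₁hom x = (-2 * c * x.1 + 1, 0)) :
    ∀ v : ℝ × ℝ → ℝ × ℝ, ContDiff ℝ 1 v →
      (∀ x₁ ∈ Set.Icc (0 : ℝ) 1, (v (x₁, 0)).2 = 0 ∧ (v (x₁, 1)).2 = 0) →
      ∫ x in Set.Icc (0 : ℝ) 1 ×ˢ Set.Icc (0 : ℝ) 1,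
        (lam0 * (symGrad u₁hom x).trace * (symGrad v x).trace
          + 2 * mu0 * ddot (symGrad u₁hom x) (symGrad v x))
      = - ∫ x in Set.Icc (0 : ℝ) 1 ×ˢ Set.Icc (0 : ℝ) 1,
        (lbar * (symGrad u₀ x).trace * (symGrad v x).trace
          + 2 * mbar * ddot (symGrad u₀ x) (symGrad v x)) := by
  intro v hv hbc
  have hsum : lam0 + 2 * mu0 ≠ 0 := by positivity
  -- rewrite the data functions in the canonical affine form
  have he₁ : u₁hom = fun p : ℝ × ℝ => ((-2*c)*p.1 + 0*p.2 + 1, 0*p.1 + 0*p.2 + 0) := by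
    funext p; rw [hu₁ p]; norm_num
  have he₀ : u₀ = fun p : ℝ × ℝ =>
      ((-(ν₀*l))*p.1 + 0*p.2 + ν₀*l/2, 0*p.1 + l*p.2 + 0) := by
    funext p; rw [hu₀ p]; norm_num
  subst he₁ he₀
  -- abbreviations
  set P : ℝ × ℝ → ℝ := fun x => (fderiv ℝ v x (1,0)).1 with hP
  set Q : ℝ × ℝ → ℝ := fun x => (fderiv ℝ v x (0,1)).2 with hQ
  set S : Set (ℝ × ℝ) := Set.Icc (0 : ℝ) 1 ×ˢ Set.Icc (0 : ℝ) 1 with hS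
  -- pointwise reduction of the two integrands
  have h1 : ∀ x : ℝ × ℝ,
      lam0 * (symGrad (fun p : ℝ × ℝ => ((-2*c)*p.1 + 0*p.2 + 1, 0*p.1 + 0*p.2 + 0)) x).trace
          * (symGrad v x).trace
        + 2 * mu0 * ddot (symGrad
            (fun p : ℝ × ℝ => ((-2*c)*p.1 + 0*p.2 + 1, 0*p.1 + 0*p.2 + 0)) x) (symGrad v x)
      = (-2*c*(lam0 + 2*mu0)) * P x + (-2*c*lam0) * Q x := by
    intro x
    rw [affine_form (-2*c) 0 1 0 0 0 v x lam0 mu0]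
    simp only [hP, hQ]; ring
  have h0 : ∀ x : ℝ × ℝ,
      lbar * (symGrad (fun p : ℝ × ℝ =>
            ((-(ν₀*l))*p.1 + 0*p.2 + ν₀*l/2, 0*p.1 + l*p.2 + 0)) x).trace
          * (symGrad v x).trace
        + 2 * mbar * ddot (symGrad (fun p : ℝ × ℝ =>
            ((-(ν₀*l))*p.1 + 0*p.2 + ν₀*l/2, 0*p.1 + l*p.2 + 0)) x) (symGrad v x)
      = (lbar*(1 - ν₀)*l - 2*mbar*ν₀*l) * P x + (lbar*(1 - ν₀)*l + 2*mbar*l) * Q x := by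
    intro x
    rw [affine_form (-(ν₀*l)) 0 (ν₀*l/2) 0 l 0 v x lbar mbar]
    simp only [hP, hQ]; ring
  simp only [h1, h0]
  -- integrability
  have hfd : Continuous (fderiv ℝ v) := hv.continuous_fderiv one_ne_zero
  have hPc : Continuous P := (hfd.clm_apply continuous_const).fst
  have hQc : Continuous Q := (hfd.clm_apply continuous_const).snd
  have hcS : IsCompact S := isCompact_Icc.prod isCompact_Icc
  have hPi : IntegrableOn P S volume := hPc.locallyIntegrable.integrableOn_isCompact hcS
  have hQi : IntegrableOn Q S volume := hQc.locallyIntegrable.integrableOn_isCompact hcS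
  have hlin : ∀ a b : ℝ, (∫ x in S, (a * P x + b * Q x))
      = a * (∫ x in S, P x) + b * (∫ x in S, Q x) := by
    intro a b
    rw [integral_add (hPi.const_mul a) (hQi.const_mul b), integral_const_mul, integral_const_mul]
  rw [hlin, hlin]
  -- the integral of Q vanishes
  have hQ0 : (∫ x in S, Q x) = 0 := integral_d2v2_eq_zero v hv hbc
  rw [hQ0]
  -- final algebra using the definition of c
  have hkey : -2*c*(lam0 + 2*mu0) = -(lbar*(1 - ν₀)*l - 2*mbar*ν₀*l) := by
    rw [hcdef]; field_simp
  rw [hkey]; ring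
end
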